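/- The function f(t) = −2(1−2t)·log₂(1−2t) − 2t·log₂t + 2(1−t)·log₂(1−t), defined for t ∈ (0, 1/2), attains its maximum at t = (5−√5)/10, and the maximum value equals log₂(3+√5) − 1. -/

import Mathlib

open Real Set

noncomputable def gg (t : ℝ) : ℝ :=
  -((1 - 2*t) * Real.log (1 - 2*t)) - t * Real.log t + (1 - t) * Real.log (1 - t)

lemma gg_cont : Continuous gg := by
  have h := Real.continuous_mul_log
  have ha : Continuous fun t : ℝ => 1 - 2*t := by continuity
  have hb : Continuous fun t : ℝ => 1 - t := by continuity
  have h1 : Continuous fun t : ℝ => (1 - 2*t) * Real.log (1 - 2*t) := by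
    simpa [Function.comp_def] using h.comp ha
  have h2 : Continuous fun t : ℝ => (1 - t) * Real.log (1 - t) := by
    simpa [Function.comp_def] using h.comp hb
  exact (h1.neg.sub h).add h2

lemma gg_deriv {t : ℝ} (h0 : 0 < t) (h1 : t < 1/2) :
    HasDerivAt gg (2 * Real.log (1 - 2*t) - Real.log t - Real.log (1 - t)) t := by
  have h2t : (0:ℝ) < 1 - 2*t := by linarith
  have h1t : (0:ℝ) < 1 - t := by linarith
  have d1 : HasDerivAt (fun t : ℝ => (1 - 2*t) * Real.log (1 - 2*t))
      ((Real.log (1 - 2*t) + 1) * (-2)) t := by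
    have ha : HasDerivAt (fun t : ℝ => 1 - 2*t) (-2) t := by
      simpa using ((hasDerivAt_id t).const_mul (2:ℝ)).const_sub 1
    have := (Real.hasDerivAt_mul_log h2t.ne').comp t ha
    simpa [Function.comp_def] using this
  have d2 : HasDerivAt (fun t : ℝ => t * Real.log t) (Real.log t + 1) t :=
    Real.hasDerivAt_mul_log h0.ne'
  have d3 : HasDerivAt (fun t : ℝ => (1 - t) * Real.log (1 - t))
      ((Real.log (1 - t) + 1) * (-1)) t := by
    have ha : HasDerivAt (fun t : ℝ => 1 - t) (-1) t := by
      simpa using (hasDerivAt_id t).const_sub 1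
    have := (Real.hasDerivAt_mul_log h1t.ne').comp t ha
    simpa [Function.comp_def] using this
  have h := (d1.neg.sub d2).add d3
  exact h.congr_deriv (by ring)

theorem stmt_7 (f : ℝ → ℝ)
    (hf : ∀ t, f t = -(2 * ((1 - 2 * t) * Real.logb 2 (1 - 2 * t)))
        - 2 * (t * Real.logb 2 t) + 2 * ((1 - t) * Real.logb 2 (1 - t))) :
    (∀ t, 0 < t → t < 1 / 2 → f t ≤ f ((5 - Real.sqrt 5) / 10)) ∧
      0 < (5 - Real.sqrt 5) / 10 ∧ (5 - Real.sqrt 5) / 10 < 1 / 2 ∧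
      f ((5 - Real.sqrt 5) / 10) = Real.logb 2 (3 + Real.sqrt 5) - 1 := by
  set s := Real.sqrt 5 with hs_def
  have hs0 : 0 < s := Real.sqrt_pos.2 (by norm_num)
  have hs2 : s ^ 2 = 5 := Real.sq_sqrt (by norm_num)
  have hs_lt : s < 5/2 := by nlinarith
  set t₀ : ℝ := (5 - s)/10 with ht₀
  have ht₀0 : 0 < t₀ := by rw [ht₀]; linarith
  have ht₀h : t₀ < 1/2 := by rw [ht₀]; linarith
  -- log identities
  have h5pos : (0:ℝ) < (5 + s)/10 := by linarith
  have hlogs : Real.log 5 = 2 * Real.log s := by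
    rw [← hs2, Real.log_pow]; push_cast; ring
  have hprod : Real.log ((5 - s)/10) + Real.log ((5 + s)/10) = -Real.log 5 := by
    rw [← Real.log_mul (by rw [ht₀] at ht₀0; exact ht₀0.ne') h5pos.ne']
    have h : (5 - s)/10 * ((5 + s)/10) = (5:ℝ)⁻¹ := by
      field_simp; nlinarith
    rw [h, Real.log_inv]
  have hsq : Real.log ((3 + s)/2) = 2 * Real.log ((5 + s)/10) + Real.log 5 := by
    have h1 : (3 + s)/2 = ((5 + s)/10)^2 * 5 := by
      field_simp; nlinarith
    rw [h1, Real.log_mul (by positivity) (by norm_num), Real.log_pow]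
    push_cast; ring
  have hs5 : Real.log (s/5) = Real.log 5 / 2 - Real.log 5 := by
    rw [Real.log_div hs0.ne' (by norm_num)]
    linarith
  have hval : 2 * gg t₀ = Real.log ((3 + s)/2) := by
    have e1 : (1:ℝ) - 2 * t₀ = s/5 := by rw [ht₀]; ring
    have e2 : (1:ℝ) - t₀ = (5 + s)/10 := by rw [ht₀]; ring
    have e3 : Real.log t₀ = -Real.log 5 - Real.log ((5 + s)/10) := by
      rw [ht₀]; linarith
    unfold gg
    rw [e1, e2, e3, hs5, hsq]
    ring
  have hfg : ∀ t, f t = 2 * gg t / Real.log 2 := by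
    intro t
    rw [hf]
    simp only [gg, Real.logb]
    ring
  have hlog2 : (0:ℝ) < Real.log 2 := Real.log_pos (by norm_num)
  have hfval : f t₀ = Real.logb 2 (3 + s) - 1 := by
    rw [hfg, hval, Real.log_div (by positivity) (by norm_num), Real.logb]
    field_simp
  have hmax : ∀ t, 0 < t → t < 1/2 → gg t ≤ gg t₀ := by
    have key1 : StrictMonoOn gg (Icc 0 t₀) := by
      apply strictMonoOn_of_deriv_pos (convex_Icc _ _) gg_cont.continuousOn
      intro x hx
      rw [interior_Icc] at hx
      obtain ⟨hx0, hx1⟩ := hx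
      have hx2 : x < 1/2 := lt_trans hx1 ht₀h
      rw [(gg_deriv hx0 hx2).deriv]
      have hA : 0 < 5 - s - 10*x := by rw [ht₀] at hx1; linarith
      have hB : 0 < 5 + s - 10*x := by linarith
      have hxx : x * (1 - x) < (1 - 2*x)^2 := by nlinarith [mul_pos hA hB]
      have hl := Real.log_lt_log (mul_pos hx0 (by linarith)) hxx
      rw [Real.log_mul hx0.ne' (by linarith : (1:ℝ) - x ≠ 0), Real.log_pow] at hl
      push_cast at hl
      linarith
    have key2 : StrictAntiOn gg (Icc t₀ (1/2)) := by
      apply strictAntiOn_of_deriv_neg (convex_Icc _ _) gg_cont.continuousOn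
      intro x hx
      rw [interior_Icc] at hx
      obtain ⟨hx0, hx1⟩ := hx
      have hx00 : 0 < x := lt_trans ht₀0 hx0
      rw [(gg_deriv hx00 hx1).deriv]
      have hA : 0 < 10*x - (5 - s) := by rw [ht₀] at hx0; linarith
      have hB : 0 < 5 + s - 10*x := by linarith
      have hxx : (1 - 2*x)^2 < x * (1 - x) := by nlinarith [mul_pos hA hB]
      have hl := Real.log_lt_log (pow_pos (by linarith) 2) hxx
      rw [Real.log_mul hx00.ne' (by linarith : (1:ℝ) - x ≠ 0), Real.log_pow] at hl
      push_cast at hl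
      linarith
    intro t h0t ht2
    rcases le_total t t₀ with h | h
    · exact key1.monotoneOn ⟨h0t.le, h⟩ ⟨ht₀0.le, le_refl _⟩ h
    · exact key2.antitoneOn ⟨le_refl _, ht₀h.le⟩ ⟨h, ht2.le⟩ h
  refine ⟨?_, ht₀0, ht₀h, hfval⟩
  intro t h0 h1
  rw [hfg, hfg]
  exact (div_le_div_iff_of_pos_right hlog2).2 (by linarith [hmax t h0 h1])
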